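/- Let Γ be an infinite subgroup of the unit circle and let X = (α, β) ∩ Γ be an arc intersected with Γ, with arc length less than 1/k of the circle (i.e., β·α⁻¹ = e(t) with 0 < t < 1/m for the given m). Then for every positive integer k ≤ m, the k-fold product set {x_1·x_2⋯x_k : x_1, …, x_k ∈ X} equals (α^k, β^k) ∩ Γ. -/

import Mathlib

noncomputable def uexp (x : ℝ) : ℂ := Complex.exp (2 * Real.pi * Complex.I * x)

lemma uexp_add (x y : ℝ) : uexp (x + y) = uexp x * uexp y := by
  simp [uexp, ← Complex.exp_add]; ring_nf

lemma uexp_zero : uexp 0 = 1 := by simp [uexp]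

lemma uexp_ne_zero (x : ℝ) : uexp x ≠ 0 := Complex.exp_ne_zero _

lemma uexp_neg (x : ℝ) : uexp (-x) = (uexp x)⁻¹ := by
  apply eq_inv_of_mul_eq_one_left
  rw [← uexp_add]; simp [uexp_zero]

lemma abs_uexp (x : ℝ) : ‖uexp x‖ = 1 := by
  rw [uexp, Complex.norm_exp]
  norm_num [Complex.mul_re, Complex.mul_im]

lemma uexp_eq_iff {x y : ℝ} : uexp x = uexp y ↔ ∃ n : ℤ, x = y + n := by
  rw [uexp, uexp, Complex.exp_eq_exp_iff_exists_int]
  constructor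
  · rintro ⟨n, hn⟩
    refine ⟨n, ?_⟩
    have hI : (2 * Real.pi * Complex.I) ≠ 0 := by
      simp [Complex.I_ne_zero, Real.pi_ne_zero]
    have : (2 * Real.pi * Complex.I) * x = (2 * Real.pi * Complex.I) * (y + n) := by
      rw [hn]; ring
    have := mul_left_cancel₀ hI this
    exact_mod_cast this
  · rintro ⟨n, hn⟩
    exact ⟨n, by rw [hn]; push_cast; ring⟩

lemma exists_uexp {z : ℂ} (hz : ‖z‖ = 1) : ∃ x : ℝ, z = uexp x := by
  have h : z = Complex.exp ((Complex.arg z : ℂ) * Complex.I) := by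
    conv_lhs => rw [← Complex.norm_mul_exp_arg_mul_I z]
    rw [hz]; simp
  obtain ⟨θ, hθ⟩ : ∃ θ : ℝ, z = Complex.exp ((θ : ℂ) * Complex.I) := ⟨_, h⟩
  refine ⟨θ / (2 * Real.pi), ?_⟩
  rw [hθ, uexp]
  congr 1
  have : (Real.pi : ℂ) ≠ 0 := by exact_mod_cast Real.pi_ne_zero
  push_cast
  field_simp

lemma uexp_int (n : ℤ) : uexp n = 1 := by
  rw [show ((n : ℝ)) = 0 + (n : ℝ) by ring, ← uexp_zero]
  exact uexp_eq_iff.2 ⟨n, by push_cast; ring⟩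

lemma uexp_pow (x : ℝ) (n : ℕ) : (uexp x) ^ n = uexp (n * x) := by
  induction n with
  | zero => simp [uexp_zero]
  | succ n ih => rw [pow_succ, ih, ← uexp_add]; push_cast; ring_nf

lemma uexp_sum {ι : Type*} (s : Finset ι) (f : ι → ℝ) :
    ∏ i ∈ s, uexp (f i) = uexp (∑ i ∈ s, f i) := by
  classical
  induction s using Finset.induction with
  | empty => simp [uexp_zero]
  | insert _ _ h ih => rw [Finset.prod_insert h, Finset.sum_insert h, ih, ← uexp_add]


def Orient (α β γ : ℂ) : Prop :=
  ∃ x y z : ℝ, x < y ∧ y < z ∧ z - x < 1 ∧ α = uexp x ∧ β = uexp y ∧ γ = uexp z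

def arc (α β : ℂ) : Set ℂ := {γ | Orient α γ β}

lemma arc_eq (a t : ℝ) (ht0 : 0 < t) (ht1 : t < 1) :
    arc (uexp a) (uexp (a + t)) = uexp '' Set.Ioo a (a + t) := by
  ext γ
  constructor
  · rintro ⟨x, y, z, hxy, hyz, hzx, hx, hy, hz⟩
    obtain ⟨p, hp⟩ := uexp_eq_iff.1 hx
    obtain ⟨q, hq⟩ := uexp_eq_iff.1 hz
    have hd : z - x = t + ((p : ℝ) - q) := by linarith
    have hdi : (p : ℤ) - q = 0 := by
      have hlow : (-1 : ℝ) < ((p - q : ℤ) : ℝ) := by push_cast; linarith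
      have hhigh : ((p - q : ℤ) : ℝ) < 1 := by push_cast; linarith
      have h1 : -1 < (p - q : ℤ) := by exact_mod_cast hlow
      have h2 : (p - q : ℤ) < 1 := by exact_mod_cast hhigh
      omega
    have hpq : (p : ℝ) = q := by exact_mod_cast sub_eq_zero.1 (by exact_mod_cast hdi)
    refine ⟨y + p, ⟨by linarith, by linarith⟩, ?_⟩
    rw [hy]
    exact uexp_eq_iff.2 ⟨p, rfl⟩
  · rintro ⟨y, ⟨hy1, hy2⟩, rfl⟩
    exact ⟨a, y, a + t, hy1, hy2, by linarith, rfl, rfl, rfl⟩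

lemma dense_preimage (Γ : Set ℂ) (hsub : ∀ z ∈ Γ, ‖z‖ = 1)
    (hone : (1 : ℂ) ∈ Γ) (hmul : ∀ x ∈ Γ, ∀ y ∈ Γ, x * y ∈ Γ)
    (hinv : ∀ x ∈ Γ, x⁻¹ ∈ Γ) (hinf : Γ.Infinite) :
    Dense {x : ℝ | uexp x ∈ Γ} := by
  set S : AddSubgroup ℝ :=
    { carrier := {x | uexp x ∈ Γ}
      zero_mem' := by simp [uexp_zero, hone]
      add_mem' := fun hx hy => by
        rw [Set.mem_setOf_eq, uexp_add]; exact hmul _ hx _ hy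
      neg_mem' := fun hx => by
        rw [Set.mem_setOf_eq, uexp_neg]; exact hinv _ hx } with hS
  rcases AddSubgroup.dense_or_cyclic S with h | ⟨a, ha⟩
  · exact h
  · exfalso
    have h1S : (1 : ℝ) ∈ S := by
      show uexp 1 ∈ Γ
      rw [show ((1:ℝ)) = ((1:ℤ):ℝ) by norm_num, uexp_int]; exact hone
    rw [ha, AddSubgroup.mem_closure_singleton] at h1S
    obtain ⟨n, hn⟩ := h1S
    have hn0 : n ≠ 0 := by rintro rfl; simp at hn
    set N := n.natAbs with hN
    have hNpos : 0 < N := Int.natAbs_pos.2 hn0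
    apply hinf
    have hfin : Set.Finite {z : ℂ | z ^ N = 1} := by
      have : {z : ℂ | z ^ N = 1} ⊆ {z : ℂ | Polynomial.IsRoot (Polynomial.X ^ N - 1) z} := by
        intro z hz
        simp [Polynomial.IsRoot, sub_eq_zero, hz]
      refine Set.Finite.subset (Polynomial.finite_setOf_isRoot ?_) this
      intro hp
      have := congrArg (Polynomial.eval 0) hp
      simp [zero_pow hNpos.ne'] at this
    refine hfin.subset ?_
    intro z hz
    obtain ⟨x, rfl⟩ := exists_uexp (hsub z hz)
    have hxS : x ∈ S := hz
    rw [ha, AddSubgroup.mem_closure_singleton] at hxS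
    obtain ⟨j, hj⟩ := hxS
    show (uexp x) ^ N = 1
    rw [uexp_pow, ← hj]
    have hsn : n.sign * (N : ℤ) = n := Int.sign_mul_natAbs n
    have hs2 : (n.sign : ℤ) * n.sign = 1 := by
      rcases lt_trichotomy n 0 with h | h | h
      · simp [Int.sign_eq_neg_one_of_neg h]
      · exact absurd h hn0
      · simp [Int.sign_eq_one_of_pos h]
    have hna : ((n : ℤ) : ℝ) * a = 1 := by
      have := hn
      rw [zsmul_eq_mul] at this
      exact_mod_cast this
    have hNa : (N : ℝ) * a = ((n.sign : ℤ) : ℝ) := by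
      have h1 : ((n.sign : ℤ) : ℝ) * ((N : ℝ) * a) = 1 := by
        have : (((n.sign * (N : ℤ)) : ℤ) : ℝ) * a = 1 := by rw [hsn]; exact hna
        push_cast at this ⊢
        linear_combination this
      have h3 : ((n.sign : ℤ) : ℝ) * ((n.sign : ℤ) : ℝ) = 1 := by exact_mod_cast hs2
      calc (N : ℝ) * a = (((n.sign : ℤ) : ℝ) * ((n.sign : ℤ) : ℝ)) * ((N : ℝ) * a) := by
            rw [h3, one_mul]
        _ = ((n.sign : ℤ) : ℝ) * (((n.sign : ℤ) : ℝ) * ((N : ℝ) * a)) := by ring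
        _ = ((n.sign : ℤ) : ℝ) := by rw [h1, mul_one]
    have key : (N : ℝ) * (j • a) = ((j * n.sign : ℤ) : ℝ) := by
      rw [zsmul_eq_mul]
      push_cast
      calc (N : ℝ) * ((j : ℝ) * a) = (j : ℝ) * ((N : ℝ) * a) := by ring
        _ = (j : ℝ) * ((n.sign : ℤ) : ℝ) := by rw [hNa]
        _ = _ := by push_cast; ring
    rw [key, uexp_int]

theorem product_of_arc (Γ : Set ℂ) (hsub : ∀ z ∈ Γ, ‖z‖ = 1)
    (hone : (1 : ℂ) ∈ Γ) (hmul : ∀ x ∈ Γ, ∀ y ∈ Γ, x * y ∈ Γ)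
    (hinv : ∀ x ∈ Γ, x⁻¹ ∈ Γ) (hinf : Γ.Infinite)
    (m : ℕ) (hm : 0 < m) (α β : ℂ) (hα : ‖α‖ = 1)
    (t : ℝ) (ht0 : 0 < t) (htm : t < 1 / m) (hβ : β = α * uexp t)
    (k : ℕ) (hk : 0 < k) (hkm : k ≤ m) :
    {z : ℂ | ∃ x : Fin k → ℂ, (∀ i, x i ∈ arc α β ∩ Γ) ∧ z = ∏ i, x i} =
      arc (α ^ k) (β ^ k) ∩ Γ := by
  obtain ⟨a, ha⟩ := exists_uexp hα
  have hm' : (0 : ℝ) < m := by exact_mod_cast hm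
  have ht1 : t < 1 := by
    calc t < 1 / m := htm
      _ ≤ 1 := by rw [div_le_one hm']; exact_mod_cast hm
  have hβ' : β = uexp (a + t) := by rw [hβ, ha, uexp_add]
  have hkt0 : 0 < (k : ℝ) * t := by positivity
  have hkt1 : (k : ℝ) * t < 1 := by
    have hkm' : (k : ℝ) ≤ m := by exact_mod_cast hkm
    calc (k : ℝ) * t ≤ m * t := by nlinarith
      _ < m * (1 / m) := by nlinarith
      _ = 1 := by field_simp
  have harc : arc α β = uexp '' Set.Ioo a (a + t) := by
    rw [ha, hβ']; exact arc_eq a t ht0 ht1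
  have hαk : α ^ k = uexp (k * a) := by rw [ha, uexp_pow]
  have hβk : β ^ k = uexp (k * a + k * t) := by
    rw [hβ', uexp_pow]; congr 1; ring
  have harck : arc (α ^ k) (β ^ k) = uexp '' Set.Ioo (k * a) (k * a + k * t) := by
    rw [hαk, hβk]; exact arc_eq _ _ hkt0 hkt1
  set M : Submonoid ℂ := { carrier := Γ, mul_mem' := fun hx hy => hmul _ hx _ hy,
                           one_mem' := hone } with hM
  haveI : Nonempty (Fin k) := Fin.pos_iff_nonempty.1 hk
  ext z
  simp only [Set.mem_setOf_eq, Set.mem_inter_iff]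
  constructor
  · rintro ⟨x, hx, rfl⟩
    have hx' : ∀ i, ∃ e, e ∈ Set.Ioo a (a + t) ∧ uexp e = x i := by
      intro i
      have h := (hx i).1
      rw [harc] at h
      exact h
    choose e he hxe using hx'
    constructor
    · rw [harck]
      refine ⟨∑ i, e i, ⟨?_, ?_⟩, ?_⟩
      · have h1 : ∑ _i : Fin k, a < ∑ i, e i :=
          Finset.sum_lt_sum_of_nonempty Finset.univ_nonempty fun i _ => (he i).1
        have h2 : ∑ _i : Fin k, a = (k : ℝ) * a := by
          simp [Finset.sum_const, nsmul_eq_mul]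
        linarith
      · have h1 : ∑ i, e i < ∑ _i : Fin k, (a + t) :=
          Finset.sum_lt_sum_of_nonempty Finset.univ_nonempty fun i _ => (he i).2
        have h2 : ∑ _i : Fin k, (a + t) = (k : ℝ) * a + (k : ℝ) * t := by
          simp [Finset.sum_const, nsmul_eq_mul]; try ring
        linarith
      · rw [← uexp_sum]
        exact Finset.prod_congr rfl fun i _ => hxe i
    · exact M.prod_mem fun i _ => (hx i).2
  · rintro ⟨hz1, hz2⟩
    rw [harck] at hz1
    obtain ⟨w, ⟨hw1, hw2⟩, rfl⟩ := hz1
    obtain ⟨n, rfl⟩ : ∃ n, k = n + 1 := ⟨k - 1, (Nat.succ_pred_eq_of_pos hk).symm⟩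
    rcases Nat.eq_zero_or_pos n with rfl | hn
    · refine ⟨fun _ => uexp w, fun i => ⟨?_, hz2⟩, by simp⟩
      rw [harc]
      refine ⟨w, ⟨?_, ?_⟩, rfl⟩ <;> push_cast at hw1 hw2 <;> linarith
    · have hn' : (0 : ℝ) < n := by exact_mod_cast hn
      set s : ℝ := w - (n + 1 : ℕ) * a with hs
      have hs0 : 0 < s := by simp only [hs]; linarith
      have hsk : s < ((n + 1 : ℕ) : ℝ) * t := by simp only [hs]; linarith
      have hsk' : s < ((n : ℝ) + 1) * t := by push_cast at hsk; linarith
      have hD := dense_preimage Γ hsub hone hmul hinv hinf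
      set lo : ℝ := max 0 ((s - t) / n) with hlo
      set hi : ℝ := min t (s / n) with hhi
      have hlohi : lo < hi := by
        apply max_lt <;> apply lt_min
        · exact ht0
        · positivity
        · rw [div_lt_iff₀ hn']; nlinarith
        · rw [div_lt_div_iff₀ hn' hn']; nlinarith
      obtain ⟨y, hyD, hy⟩ := hD.exists_mem_open isOpen_Ioo
        (Set.nonempty_Ioo.2 (by linarith : a + lo < a + hi))
      obtain ⟨hyl, hyr⟩ := hy
      have hya : a < y := by
        have : a + 0 ≤ a + lo := by simp [hlo, le_max_left]
        linarith
      have hyat : y < a + t := by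
        have : a + hi ≤ a + t := by simp [hhi, min_le_left]
        linarith
      set u : ℝ := y - a with hu
      have hul : (s - t) / n < u := by
        have : a + (s - t) / n ≤ a + lo := by simp [hlo, le_max_right]
        simp only [hu]; linarith
      have hur : u < s / n := by
        have : a + hi ≤ a + s / n := by simp [hhi, min_le_right]
        simp only [hu]; linarith
      have hnu1 : (n : ℝ) * u < s := by
        have h := (lt_div_iff₀ hn').1 hur
        calc (n : ℝ) * u = u * n := mul_comm _ _
          _ < s := h
      have hnu2 : s - (n : ℝ) * u < t := by
        have h := (div_lt_iff₀ hn').1 hul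
        have h' : s - t < (n : ℝ) * u := by
          calc s - t < u * n := h
            _ = (n : ℝ) * u := mul_comm _ _
        linarith
      set v : ℝ := w - n * y with hv
      have hveq : v = a + (s - n * u) := by simp only [hv, hs, hu]; push_cast; ring
      have hvmem : v ∈ Set.Ioo a (a + t) := by
        constructor <;> rw [hveq] <;> linarith
      have hyΓ : uexp y ∈ Γ := hyD
      have hvΓ : uexp v ∈ Γ := by
        have hpow : uexp ((n : ℝ) * y) ∈ Γ := by
          rw [← uexp_pow]
          exact M.pow_mem hyΓ n
        have : uexp v = uexp w * (uexp ((n : ℝ) * y))⁻¹ := by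
          rw [← uexp_neg, ← uexp_add]
          congr 1
          try simp only [hv, sub_eq_add_neg]
          try ring
        rw [this]
        exact hmul _ hz2 _ (hinv _ hpow)
      refine ⟨fun i => if (i : ℕ) = n then uexp v else uexp y, fun i => ?_, ?_⟩
      · by_cases hin : (i : ℕ) = n
        · have hxi : (fun i : Fin (n+1) => if (i : ℕ) = n then uexp v else uexp y) i
              = uexp v := by simp [hin]
          rw [hxi]
          exact ⟨harc ▸ ⟨v, hvmem, rfl⟩, hvΓ⟩
        · have hxi : (fun i : Fin (n+1) => if (i : ℕ) = n then uexp v else uexp y) i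
              = uexp y := by simp [hin]
          rw [hxi]
          exact ⟨harc ▸ ⟨y, ⟨hya, hyat⟩, rfl⟩, hyΓ⟩
      · show uexp w = ∏ i : Fin (n+1), (if ((i : ℕ) = n) then uexp v else uexp y)
        have hsum : ∏ i : Fin (n + 1), (if ((i : ℕ) = n) then uexp v else uexp y)
            = uexp (∑ i : Fin (n + 1), (if ((i : ℕ) = n) then v else y)) := by
          rw [← uexp_sum]
          exact Finset.prod_congr rfl fun i _ => by split <;> rfl
        rw [hsum]
        have : ∑ i : Fin (n + 1), (if ((i : ℕ) = n) then v else y) = n * y + v := by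
          rw [Fin.sum_univ_castSucc]
          have h1 : ∀ i : Fin n, ((i.castSucc : Fin (n+1)) : ℕ) ≠ n := fun i => by
            simp [Fin.castSucc]; omega
          have h2 : ((Fin.last n : Fin (n+1)) : ℕ) = n := rfl
          rw [if_pos h2]
          congr 1
          rw [Finset.sum_congr rfl fun i _ => if_neg (h1 i)]
          simp [Finset.sum_const, nsmul_eq_mul]
        rw [this]
        congr 1
        simp only [hv]; ring
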